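/- Let G = ⊕_{i∈I} A_i be a completely decomposable torsion-free abelian group, where each A_i is torsion-free of rank 1. Then the following are equivalent: (a) G is Bassian-finite; (b) G satisfies the ascending type condition, i.e., there is no sequence (i_k)_{k∈ℕ} of pairwise distinct indices in I such that for each k there exists an injective homomorphism A_{i_k} → A_{i_{k+1}}; (c) G is relatively co-Hopfian. -/

import Mathlib

open DirectSum TensorProduct

/-- An abelian group `G` is *Bassian-finite* if there is no injective homomorphism
from `G` into a proper direct summand of `G`. -/
def BassianFinite (G : Type*) [AddCommGroup G] : Prop :=
  ∀ A B : AddSubgroup G, IsCompl A B → B ≠ ⊥ → ∀ φ : G →+ A, ¬ Function.Injective φ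

/-- An abelian group `G` is *relatively co-Hopfian* if the image of every injective
endomorphism of `G` is an essential subgroup of `G`. -/
def RelativelyCoHopfian (G : Type*) [AddCommGroup G] : Prop :=
  ∀ φ : G →+ G, Function.Injective φ → ∀ B : AddSubgroup G, B ≠ ⊥ → φ.range ⊓ B ≠ ⊥

lemma exists_chi (A : Type*) [AddCommGroup A]
    (htf : ∀ g : A, g ≠ 0 → ¬ IsOfFinAddOrder g)
    (hrk : Module.rank ℚ (ℚ ⊗[ℤ] A) = 1) :
    ∃ χ : A →+ ℚ, Function.Injective χ := by
  haveI : NoZeroSMulDivisors ℤ A :=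
    ⟨fun {n a} h => by
      by_contra hc; push_neg at hc
      exact htf a hc.2 (isOfFinAddOrder_iff_zsmul_eq_zero.mpr ⟨n, hc.1, h⟩)⟩
  have hbc : IsBaseChange ℚ (TensorProduct.mk ℤ ℚ A 1) := TensorProduct.isBaseChange ℤ A ℚ
  have hloc : IsLocalizedModule (nonZeroDivisors ℤ) (TensorProduct.mk ℤ ℚ A 1) :=
    (isLocalizedModule_iff_isBaseChange (nonZeroDivisors ℤ) ℚ _).mpr hbc
  have hmkinj : ∀ a : A, TensorProduct.mk ℤ ℚ A 1 a = 0 → a = 0 := by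
    intro a ha
    obtain ⟨s, hs⟩ := (IsLocalizedModule.eq_zero_iff (nonZeroDivisors ℤ) _).mp ha
    have hs0 : (s : ℤ) ≠ 0 := nonZeroDivisors.coe_ne_zero s
    exact (smul_eq_zero_iff_right hs0).mp hs
  obtain ⟨v₀, hv₀, hv⟩ := rank_eq_one_iff.mp hrk
  have uniq : ∀ w : ℚ ⊗[ℤ] A, ∃! r : ℚ, r • v₀ = w := by
    intro w
    obtain ⟨r, hr⟩ := hv w
    exact ⟨r, hr, fun r' hr' => by
      have : (r' - r) • v₀ = 0 := by rw [sub_smul, hr, hr', sub_self]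
      have h2 := (smul_eq_zero.mp this).resolve_right hv₀
      linarith [sub_eq_zero.mp h2]⟩
  classical
  set c : ℚ ⊗[ℤ] A → ℚ := fun w => (uniq w).choose with hc
  have hcspec : ∀ w, c w • v₀ = w := fun w => (uniq w).choose_spec.1
  have hcuniq : ∀ w r, r • v₀ = w → c w = r := fun w r h =>
    ((uniq w).choose_spec.2 r h).symm ▸ rfl
  have hcuniq' : ∀ w r, r • v₀ = w → r = c w := fun w r h => (uniq w).choose_spec.2 r h
  refine ⟨AddMonoidHom.mk' (fun a => c (TensorProduct.mk ℤ ℚ A 1 a)) ?_, ?_⟩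
  · intro a b
    refine (hcuniq' _ _ ?_).symm
    rw [add_smul, hcspec, hcspec, map_add]
  · intro a b hab
    simp only [AddMonoidHom.mk'_apply] at hab
    have : TensorProduct.mk ℤ ℚ A 1 a = TensorProduct.mk ℤ ℚ A 1 b := by
      rw [← hcspec (TensorProduct.mk ℤ ℚ A 1 a), ← hcspec (TensorProduct.mk ℤ ℚ A 1 b), hab]
    have := hmkinj (a - b) (by rw [map_sub, this, sub_self])
    exact sub_eq_zero.mp this


lemma exists_ne_zero (A : Type*) [AddCommGroup A]
    (hrk : Module.rank ℚ (ℚ ⊗[ℤ] A) = 1) : ∃ a : A, a ≠ 0 := by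
  by_contra h
  push_neg at h
  haveI : Subsingleton A := ⟨fun a b => by rw [h a, h b]⟩
  haveI : Subsingleton (ℚ ⊗[ℤ] A) := inferInstance
  rw [rank_subsingleton'] at hrk
  exact one_ne_zero hrk.symm

open DirectSum

namespace CDAux
variable {I : Type*} {A : I → Type*} [∀ i, AddCommGroup (A i)]

def evalHom (j : I) : (⨁ i, A i) →+ A j :=
  AddMonoidHom.mk' (fun g => g j) (fun g h => by simp)

@[simp] lemma evalHom_apply (j : I) (g : ⨁ i, A i) : evalHom j g = g j := rfl

lemma coordSum [DecidableEq I] (t : Finset I) (x : ∀ j, A j) (k : I) :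
    (∑ j ∈ t, DirectSum.of A j (x j)) k = if k ∈ t then x k else 0 := by
  have h : (∑ j ∈ t, DirectSum.of A j (x j)) k
      = ∑ j ∈ t, (DirectSum.of A j (x j)) k := by
    rw [← evalHom_apply, map_sum]
    simp
  rw [h]
  by_cases hk : k ∈ t
  · rw [if_pos hk, Finset.sum_eq_single_of_mem k hk]
    · exact DirectSum.of_eq_same k (x k)
    · intro j _ hj
      exact DirectSum.of_eq_of_ne _ _ _ (Ne.symm hj)
  · rw [if_neg hk]
    exact Finset.sum_eq_zero fun j hj =>
      DirectSum.of_eq_of_ne _ _ _ (fun h => hk (h ▸ hj))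

def Rel (A : I → Type*) [∀ i, AddCommGroup (A i)] (i j : I) : Prop :=
  ∃ ψ : A i →+ A j, Function.Injective ψ

lemma rel_refl (i : I) : Rel A i i := ⟨AddMonoidHom.id _, fun _ _ h => h⟩

lemma rel_trans {i j k : I} (h1 : Rel A i j) (h2 : Rel A j k) : Rel A i k := by
  obtain ⟨f, hf⟩ := h1; obtain ⟨g, hg⟩ := h2
  exact ⟨g.comp f, hg.comp hf⟩

section Chi
variable (χ : ∀ i, A i →+ ℚ) (hχ : ∀ i, Function.Injective (χ i))
  (ha : ∀ i, ∃ a : A i, a ≠ 0)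



lemma chi_ne_zero (hχ : ∀ i, Function.Injective (χ i)) {i : I} {a : A i} (h : a ≠ 0) :
    χ i a ≠ 0 := fun h0 => h (hχ i (by rw [h0, map_zero]))

lemma scalar_lemma (hχ : ∀ i, Function.Injective (χ i))
    (ha : ∀ i, ∃ a : A i, a ≠ 0) (i j : I) (f : A i →+ A j) :
    ∃ c : ℚ, ∀ a, χ j (f a) = c * χ i a := by
  obtain ⟨a₀, ha₀⟩ := ha i
  have h₀ : χ i a₀ ≠ 0 := chi_ne_zero χ hχ ha₀
  refine ⟨χ j (f a₀) / χ i a₀, fun a => ?_⟩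
  set q : ℚ := χ i a / χ i a₀ with hq
  have hqa : χ i a = q * χ i a₀ := by
    rw [hq, div_mul_cancel₀ _ h₀]
  have hqd : ((q.den : ℚ)) * q = q.num := by
    rw [mul_comm, Rat.mul_den_eq_num]
  have hdep : (q.den : ℤ) • a = q.num • a₀ := by
    apply hχ i
    rw [map_zsmul, map_zsmul, zsmul_eq_mul, zsmul_eq_mul, hqa]
    push_cast
    rw [← mul_assoc, hqd]
  have key : (q.den : ℚ) * χ j (f a) = (q.num : ℚ) * χ j (f a₀) := by
    have := congrArg (fun x => χ j (f x)) hdep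
    simpa [map_zsmul, smul_eq_mul] using this
  have hden : ((q.den : ℚ)) ≠ 0 := by exact_mod_cast q.den_ne_zero
  have hfa : χ j (f a) = q * χ j (f a₀) := by
    have h2 : χ j (f a) = ((q.num:ℚ) / q.den) * χ j (f a₀) := by
      rw [div_mul_eq_mul_div, eq_div_iff hden, mul_comm (χ j (f a)) _]
      linarith [key]
    rwa [Rat.num_div_den] at h2
  rw [hfa, hqa]
  field_simp

include hχ in
lemma zsmul_eq_zero' {i : I} {n : ℤ} {a : A i} (hn : n ≠ 0) (h : n • a = 0) : a = 0 := by
  apply hχ i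
  have h2 : (n : ℚ) * χ i a = 0 := by
    rw [← zsmul_eq_mul, ← map_zsmul, h, map_zero]
  rw [map_zero]
  rcases mul_eq_zero.mp h2 with h3 | h3
  · exact absurd (by exact_mod_cast h3) hn
  · exact h3

include hχ ha in
lemma rel_of_ne_zero {i j : I} (f : A i →+ A j) (a : A i) (h : f a ≠ 0) : Rel A i j := by
  obtain ⟨c, hc⟩ := scalar_lemma χ hχ ha i j f
  have hc0 : c ≠ 0 := by
    intro h0
    exact h (hχ j (by rw [hc, h0, zero_mul, map_zero]))
  refine ⟨f, fun x y hxy => hχ i ?_⟩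
  have := congrArg (χ j) hxy
  rw [hc, hc] at this
  exact mul_left_cancel₀ hc0 this

end Chi
def suppIn (T : Set I) : AddSubgroup (⨁ i, A i) where
  carrier := {g | ∀ j ∉ T, g j = 0}
  zero_mem' := fun j _ => by simp
  add_mem' {a b} ha hb := fun j hj => by
    have : (a + b) j = a j + b j := by simp
    rw [this, ha j hj, hb j hj, add_zero]
  neg_mem' {a} ha := fun j hj => by
    have h2 : (-a) j = -(a j) := DFinsupp.neg_apply a j
    rw [h2, ha j hj, neg_zero]

lemma mem_suppIn {T : Set I} {g : ⨁ i, A i} : g ∈ suppIn T ↔ ∀ j ∉ T, g j = 0 := Iff.rfl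

lemma suppIn_mono {T T' : Set I} (h : T ⊆ T') : (suppIn T : AddSubgroup (⨁ i, A i)) ≤ suppIn T' :=
  fun _ hg j hj => hg j (fun hT => hj (h hT))

lemma of_mem_suppIn [DecidableEq I] {T : Set I} {i : I} (hi : i ∈ T) (a : A i) :
    DirectSum.of A i a ∈ suppIn T := by
  intro j hj
  exact DirectSum.of_eq_of_ne _ _ _ (fun h => hj (h ▸ hi)) 


lemma support_subset' [DecidableEq I] [∀ (i : I) (x : A i), Decidable (x ≠ 0)]
    {T : Set I} {g : ⨁ i, A i} (hg : g ∈ suppIn T) : ∀ j ∈ DFinsupp.support g, j ∈ T := by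
  intro j hj
  by_contra h
  exact (DFinsupp.mem_support_iff.mp hj) (hg j h)

section Phi
variable (φ : (⨁ i, A i) →+ (⨁ i, A i))

/-- the subgroup of elements a multiple of which is reached by `φ` from `H` -/
def exd (H : AddSubgroup (⨁ i, A i)) : AddSubgroup (⨁ i, A i) where
  carrier := {g | ∃ n : ℤ, n ≠ 0 ∧ ∃ h ∈ H, φ h = n • g}
  zero_mem' := ⟨1, one_ne_zero, 0, H.zero_mem, by simp⟩
  add_mem' := by
    rintro a b ⟨n, hn, x, hx, hex⟩ ⟨m, hm, y, hy, hey⟩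
    refine ⟨n * m, mul_ne_zero hn hm, m • x + n • y,
      AddSubgroup.add_mem H (AddSubgroup.zsmul_mem H hx m) (AddSubgroup.zsmul_mem H hy n), ?_⟩
    rw [map_add, map_zsmul, map_zsmul, hex, hey, smul_smul, smul_smul, smul_add, mul_comm m n]
  neg_mem' := by
    rintro a ⟨n, hn, x, hx, hex⟩
    exact ⟨n, hn, -x, AddSubgroup.neg_mem H hx, by rw [map_neg, hex, smul_neg]⟩

lemma mem_exd {H : AddSubgroup (⨁ i, A i)} {g : ⨁ i, A i} :
    g ∈ exd φ H ↔ ∃ n : ℤ, n ≠ 0 ∧ ∃ h ∈ H, φ h = n • g := Iff.rfl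

lemma exd_mono {H H' : AddSubgroup (⨁ i, A i)} (h : H ≤ H') : exd φ H ≤ exd φ H' := by
  rintro g ⟨n, hn, x, hx, hex⟩
  exact ⟨n, hn, x, h hx, hex⟩

variable (χ : ∀ i, A i →+ ℚ) (hχ : ∀ i, Function.Injective (χ i))
  (ha : ∀ i, ∃ a : A i, a ≠ 0)

include hχ ha in
lemma comp_rel {i : I} (a : A i) {j : I} [DecidableEq I]
    (h : (φ (DirectSum.of A i a)) j ≠ 0) : Rel A i j :=
  rel_of_ne_zero χ hχ ha ((evalHom j).comp (φ.comp (DirectSum.of A i))) a h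

include hχ ha in
lemma inv_suppIn [DecidableEq I] {T : Set I} (hT : ∀ j ∈ T, ∀ k, Rel A j k → k ∈ T)
    {g : ⨁ i, A i} (hg : g ∈ suppIn T) : φ g ∈ suppIn T := by
  classical
  intro k hk
  conv_lhs => rw [← DirectSum.sum_support_of g]
  rw [← evalHom_apply, map_sum, map_sum]
  refine Finset.sum_eq_zero fun j hj => ?_
  by_contra hne
  exact hk (hT j (support_subset' hg j hj) k (comp_rel φ χ hχ ha _ hne))

end Phi

section WF
variable (hb : ¬ ∃ f : ℕ → I, Function.Injective f ∧
    ∀ k : ℕ, ∃ ψ : A (f k) →+ A (f (k + 1)), Function.Injective ψ)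

include hb in
lemma wf_up : WellFounded (fun j i : I => Rel A i j ∧ ¬ Rel A j i) := by
  by_contra hwf
  haveI : IsIrrefl I (fun j i : I => Rel A i j ∧ ¬ Rel A j i) :=
    ⟨fun i h => h.2 h.1⟩
  haveI : IsTrans I (fun j i : I => Rel A i j ∧ ¬ Rel A j i) :=
    ⟨fun k j i hkj hji => ⟨rel_trans hji.1 hkj.1,
      fun h => hkj.2 (rel_trans h hji.1)⟩⟩
  haveI : IsStrictOrder I (fun j i : I => Rel A i j ∧ ¬ Rel A j i) := ⟨⟩
  rw [RelEmbedding.wellFounded_iff_isEmpty, not_isEmpty_iff] at hwf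
  obtain ⟨f⟩ := hwf
  refine hb ⟨f, f.injective, fun k => ?_⟩
  exact (f.map_rel_iff.mpr (Nat.lt_succ_self k : (k+1) > k)).1

include hb in
lemma cl_finite (i : I) : {j | Rel A i j ∧ Rel A j i}.Finite := by
  by_contra hinf
  obtain f := Set.Infinite.natEmbedding _ hinf
  refine hb ⟨fun k => (f k : I), fun x y hxy => f.injective (Subtype.ext hxy), fun k => ?_⟩
  exact rel_trans (f k).2.2 (f (k+1)).2.1

end WF


section Main
variable [DecidableEq I]
variable (χ : ∀ i, A i →+ ℚ) (hχ : ∀ i, Function.Injective (χ i))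
  (ha : ∀ i, ∃ a : A i, a ≠ 0)
  (hb : ¬ ∃ f : ℕ → I, Function.Injective f ∧
    ∀ k : ℕ, ∃ ψ : A (f k) →+ A (f (k + 1)), Function.Injective ψ)
  (φ : (⨁ i, A i) →+ (⨁ i, A i)) (hφ : Function.Injective φ)

/-- up-set of `i` -/
def upSet (A : I → Type*) [∀ i, AddCommGroup (A i)] (i : I) : Set I := {j | Rel A i j}
/-- strict up-set of `i` -/
def strUp (A : I → Type*) [∀ i, AddCommGroup (A i)] (i : I) : Set I :=
  {j | Rel A i j ∧ ¬ Rel A j i}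
/-- class of `i` -/
def cls (A : I → Type*) [∀ i, AddCommGroup (A i)] (i : I) : Set I :=
  {j | Rel A i j ∧ Rel A j i}

lemma upSet_closed {i : I} : ∀ j ∈ upSet A i, ∀ k, Rel A j k → k ∈ upSet A i :=
  fun _ hj k hjk => rel_trans hj hjk

lemma strUp_closed {i : I} : ∀ j ∈ strUp A i, ∀ k, Rel A j k → k ∈ strUp A i :=
  fun j hj k hjk => ⟨rel_trans hj.1 hjk, fun h => hj.2 (rel_trans hjk h)⟩

lemma cls_sub_upSet {i : I} : cls A i ⊆ upSet A i := fun _ hj => hj.1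

lemma strUp_sub_upSet {i : I} : strUp A i ⊆ upSet A i := fun _ hj => hj.1

lemma upSet_sub_strUp {i j : I} (hj : j ∈ strUp A i) : upSet A j ⊆ strUp A i :=
  fun k hk => strUp_closed j hj k hk

lemma coords_eq_zero {g : ⨁ i, A i} (h : ∀ j, g j = 0) : g = 0 :=
  DFinsupp.ext fun j => by rw [h j]; rfl

include hχ ha hb hφ in
theorem main_ind : ∀ i : I, ∀ g ∈ suppIn (upSet A i), g ∈ exd φ (suppIn (upSet A i)) := by
  classical
  intro i
  induction i using (wf_up hb).induction with
  | _ i IH =>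
  -- Step A : strict up-set
  have hSA : ∀ g ∈ suppIn (strUp A i), g ∈ exd φ (suppIn (strUp A i)) := by
    intro g hg
    rw [← DirectSum.sum_support_of g]
    refine AddSubgroup.sum_mem _ fun j hj => ?_
    have hjs : j ∈ strUp A i := support_subset' hg j hj
    have h1 : DirectSum.of A j (g j) ∈ suppIn (upSet A j) :=
      of_mem_suppIn (show j ∈ upSet A j from rel_refl j) (g j)
    exact exd_mono φ (suppIn_mono (upSet_sub_strUp hjs)) (IH j hjs _ h1)
  -- class of i as a Finset
  set s : Finset I := (cl_finite hb i).toFinset with hs_def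
  have hs_mem : ∀ {j}, j ∈ s ↔ j ∈ cls A i := fun {j} => Set.Finite.mem_toFinset _
  -- scalars of the matrix of φ
  have hc0 : ∀ k' k : I, ∃ cc : ℚ, ∀ a : A k,
      χ k' ((φ (DirectSum.of A k a)) k') = cc * χ k a := fun k' k =>
    scalar_lemma χ hχ ha k k' ((evalHom k').comp (φ.comp (DirectSum.of A k)))
  choose c hc using hc0
  -- the key compatibility
  have hKC : ∀ v ∈ suppIn (cls A i), ∀ k' : I,
      χ k' ((φ v) k') = ∑ j ∈ s, c k' j * χ j (v j) := by
    intro v hv k'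
    have h1 : χ k' ((φ v) k')
        = ∑ j ∈ DFinsupp.support v, χ k' ((φ (DirectSum.of A j (v j))) k') := by
      conv_lhs => rw [← DirectSum.sum_support_of v]
      rw [map_sum, ← evalHom_apply, map_sum, map_sum]
      simp only [evalHom_apply]
    rw [h1, Finset.sum_congr rfl (fun j _ => hc k' j (v j))]
    refine Finset.sum_subset (fun j hj => hs_mem.mpr (support_subset' hv j hj))
      (fun j _ hj => ?_)
    rw [DFinsupp.notMem_support_iff.mp hj, map_zero, mul_zero]
  -- density of χ-images
  have hDENSE : ∀ w : ↥s → ℚ, ∃ N : ℤ, N ≠ 0 ∧ ∃ v ∈ suppIn (A := A) (cls A i),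
      ∀ k : ↥s, χ (k : I) (v (k : I)) = (N : ℚ) * w k := by
    let S : Submodule ℚ (↥s → ℚ) :=
      { carrier := {w | ∃ N : ℤ, N ≠ 0 ∧ ∃ v ∈ suppIn (A := A) (cls A i),
          ∀ k : ↥s, χ (k : I) (v (k : I)) = (N : ℚ) * w k}
        zero_mem' := ⟨1, one_ne_zero, 0, AddSubgroup.zero_mem _, fun k => by simp⟩
        add_mem' := by
          rintro w₁ w₂ ⟨N₁, hN₁, v₁, hv₁, h₁⟩ ⟨N₂, hN₂, v₂, hv₂, h₂⟩
          refine ⟨N₁ * N₂, mul_ne_zero hN₁ hN₂, N₂ • v₁ + N₁ • v₂,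
            AddSubgroup.add_mem _ (AddSubgroup.zsmul_mem _ hv₁ _)
              (AddSubgroup.zsmul_mem _ hv₂ _), fun k => ?_⟩
          have e : (N₂ • v₁ + N₁ • v₂) (k : I) = N₂ • (v₁ (k : I)) + N₁ • (v₂ (k : I)) := by
            rw [← evalHom_apply, map_add, map_zsmul, map_zsmul]; rfl
          rw [e, map_add, map_zsmul, map_zsmul, h₁, h₂, Pi.add_apply]
          push_cast
          rw [zsmul_eq_mul, zsmul_eq_mul]
          ring
        smul_mem' := by
          rintro q w ⟨N, hN, v, hv, h⟩
          refine ⟨N * q.den, mul_ne_zero hN (by exact_mod_cast q.den_ne_zero),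
            q.num • v, AddSubgroup.zsmul_mem _ hv _, fun k => ?_⟩
          have e : (q.num • v) (k : I) = q.num • (v (k : I)) := by
            rw [← evalHom_apply, map_zsmul]; rfl
          have hqd : ((q.den : ℚ)) * q = q.num := by rw [mul_comm, Rat.mul_den_eq_num]
          rw [e, map_zsmul, h, Pi.smul_apply, zsmul_eq_mul, smul_eq_mul]
          push_cast
          linear_combination (-((N : ℚ) * w k)) * hqd
        }
    have hsingle : ∀ k₀ : ↥s, Pi.single k₀ (1 : ℚ) ∈ S := by
      intro k₀
      obtain ⟨a₀, ha₀⟩ := ha (k₀ : I)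
      have hm : (DirectSum.of A (k₀ : I) a₀) ∈ suppIn (cls A i) :=
        of_mem_suppIn (hs_mem.mp k₀.2) a₀
      have hbase : (fun k : ↥s => χ (k : I) ((DirectSum.of A (k₀ : I) a₀) (k : I))) ∈ S :=
        ⟨1, one_ne_zero, _, hm, fun k => by rw [Int.cast_one, one_mul]⟩
      have he : (Pi.single k₀ (1 : ℚ) : ↥s → ℚ)
          = (χ (k₀ : I) a₀)⁻¹ • ((fun k : ↥s => χ (k : I) ((DirectSum.of A (k₀ : I) a₀) (k : I))) : ↥s → ℚ) := by
        funext k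
        by_cases hk : k = k₀
        · subst hk
          rw [Pi.single_eq_same, Pi.smul_apply, DirectSum.of_eq_same, smul_eq_mul,
            inv_mul_cancel₀ (chi_ne_zero χ hχ ha₀)]
        · rw [Pi.single_eq_of_ne hk, Pi.smul_apply,
            DirectSum.of_eq_of_ne _ _ _ (Ne.symm (fun hco => hk (Subtype.ext hco.symm))), map_zero,
            smul_zero]
      rw [he]
      exact Submodule.smul_mem S _ hbase
    intro w
    have hw : w = ∑ k₀ : ↥s, w k₀ • (Pi.single k₀ (1 : ℚ) : ↥s → ℚ) := by
      funext k
      rw [Finset.sum_apply]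
      simp [Pi.single_apply]
    have : w ∈ S := hw ▸ Submodule.sum_mem S fun k₀ _ => Submodule.smul_mem S _ (hsingle k₀)
    exact this
  -- diagonal injectivity at the level of the group
  have hBinj : ∀ v ∈ suppIn (cls A i), (∀ k ∈ s, (φ v) k = 0) → v = 0 := by
    intro v hv hzero
    have hv' : φ v ∈ suppIn (strUp A i) := by
      have h1 : φ v ∈ suppIn (upSet A i) :=
        inv_suppIn φ χ hχ ha upSet_closed (suppIn_mono cls_sub_upSet hv)
      intro k hk
      by_cases hku : k ∈ upSet A i
      · have hrel : Rel A k i := not_not.mp fun h => hk ⟨hku, h⟩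
        exact hzero k (hs_mem.mpr ⟨hku, hrel⟩)
      · exact h1 k hku
    obtain ⟨n, hn, h, hh, hexx⟩ := hSA _ hv'
    have heq : h = n • v := hφ (by rw [hexx, map_zsmul])
    have hz : ∀ j, (n • v) j = 0 := by
      intro j
      by_cases hj : j ∈ cls A i
      · rw [← heq]
        exact hh j (fun hcon => hcon.2 hj.2)
      · have : (n • v) j = n • (v j) := by rw [← evalHom_apply, map_zsmul]; rfl
        rw [this, hv j hj, smul_zero]
    refine coords_eq_zero fun j => ?_
    have hnvj : n • (v j) = 0 := by
      have := hz j
      rwa [show (n • v) j = n • (v j) by rw [← evalHom_apply, map_zsmul]; rfl] at this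
    exact zsmul_eq_zero' χ hχ hn hnvj
  -- the matrix
  let M : Matrix ↥s ↥s ℚ := Matrix.of fun k' k => c (k' : I) (k : I)
  have hMapp : ∀ (w : ↥s → ℚ) (k' : ↥s),
      M.mulVecLin w k' = ∑ k : ↥s, c (k' : I) (k : I) * w k := by
    intro w k'
    simp [M, Matrix.mulVecLin_apply, Matrix.mulVec, dotProduct]
  have hΨinj : Function.Injective M.mulVecLin := by
    rw [injective_iff_map_eq_zero]
    intro w hw
    obtain ⟨N, hN, v, hv, hvw⟩ := hDENSE w
    have hφv0 : ∀ k' ∈ s, (φ v) k' = 0 := by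
      intro k' hk'
      apply hχ k'
      rw [map_zero, hKC v hv k', ← Finset.sum_coe_sort s (fun j => c k' j * χ j (v j))]
      have hterm : ∀ k : ↥s, c k' (k : I) * χ (k : I) (v (k : I))
          = (N : ℚ) * (c k' (k : I) * w k) := fun k => by rw [hvw k]; ring
      rw [Finset.sum_congr rfl (fun k _ => hterm k), ← Finset.mul_sum,
        ← hMapp w ⟨k', hk'⟩, hw]
      simp
    have hv0 := hBinj v hv hφv0
    funext k
    have := hvw k
    rw [hv0] at this
    have h0 : (0 : ⨁ i, A i) (k : I) = 0 := rfl
    rw [h0, map_zero] at this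
    have hNQ : (N : ℚ) ≠ 0 := by exact_mod_cast hN
    have := (mul_eq_zero.mp this.symm).resolve_left hNQ
    rw [this]; rfl
  have hΨsurj : Function.Surjective M.mulVecLin :=
    LinearMap.injective_iff_surjective.mp hΨinj
  -- Step C conclusion
  have hSCC : ∀ g ∈ suppIn (A := A) (cls A i), ∃ n : ℤ, n ≠ 0 ∧ ∃ u ∈ suppIn (cls A i),
      ∀ k ∈ s, (φ u) k = (n • g) k := by
    intro g hg
    obtain ⟨w, hw⟩ := hΨsurj (fun k : ↥s => χ (k : I) (g (k : I)))
    obtain ⟨N, hN, u, hu, huw⟩ := hDENSE w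
    refine ⟨N, hN, u, hu, fun k hk => ?_⟩
    apply hχ k
    have hrhs : χ k ((N • g) k) = (N : ℚ) * χ k (g k) := by
      rw [show (N • g) k = N • (g k) by rw [← evalHom_apply, map_zsmul]; rfl,
        map_zsmul, zsmul_eq_mul]
    rw [hrhs, hKC u hu k, ← Finset.sum_coe_sort s (fun j => c k j * χ j (u j))]
    have hterm : ∀ kk : ↥s, c k (kk : I) * χ (kk : I) (u (kk : I))
        = (N : ℚ) * (c k (kk : I) * w kk) := fun kk => by rw [huw kk]; ring
    rw [Finset.sum_congr rfl (fun kk _ => hterm kk), ← Finset.mul_sum, ← hMapp w ⟨k, hk⟩, hw]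
  -- Step D : conclude
  intro g hg
  set t := DFinsupp.support g with ht_def
  set tC := t.filter (· ∈ cls A i) with htC_def
  set gC := ∑ j ∈ tC, DirectSum.of A j (g j) with hgC_def
  have hgC_coord : ∀ k, gC k = if k ∈ tC then g k else 0 := fun k => coordSum tC _ k
  have hgC_eq : ∀ k ∈ cls A i, gC k = g k := by
    intro k hk
    rw [hgC_coord k]
    by_cases hkt : k ∈ t
    · rw [if_pos (Finset.mem_filter.mpr ⟨hkt, hk⟩)]
    · rw [if_neg (fun hcon => hkt (Finset.mem_filter.mp hcon).1),
        DFinsupp.notMem_support_iff.mp hkt]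
  have hgC_mem : gC ∈ suppIn (cls A i) := by
    intro j hj
    rw [hgC_coord j, if_neg (fun hcon => hj (Finset.mem_filter.mp hcon).2)]
  obtain ⟨n₁, hn₁, u, hu, hφu⟩ := hSCC gC hgC_mem
  have hφuUp : φ u ∈ suppIn (upSet A i) :=
    inv_suppIn φ χ hχ ha upSet_closed (suppIn_mono cls_sub_upSet hu)
  set r := n₁ • g - φ u with hr_def
  have hr_coord : ∀ k, r k = n₁ • (g k) - (φ u) k := by
    intro k
    rw [hr_def, ← evalHom_apply, map_sub, map_zsmul]; rfl
  have hr : r ∈ suppIn (strUp A i) := by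
    intro k hk
    rw [hr_coord k]
    by_cases hcls : k ∈ cls A i
    · rw [hφu k (hs_mem.mpr hcls),
        show (n₁ • gC) k = n₁ • (gC k) by rw [← evalHom_apply, map_zsmul]; rfl,
        hgC_eq k hcls, sub_self]
    · by_cases hup : k ∈ upSet A i
      · exact absurd ⟨hup, not_not.mp fun h2 => hk ⟨hup, h2⟩⟩ hcls
      · rw [hg k hup, hφuUp k hup, smul_zero, sub_self]
  obtain ⟨n₂, hn₂, h', hh', hexr⟩ := hSA r hr
  refine ⟨n₂ * n₁, mul_ne_zero hn₂ hn₁, h' + n₂ • u, ?_, ?_⟩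
  · exact AddSubgroup.add_mem _ (suppIn_mono strUp_sub_upSet hh')
      (AddSubgroup.zsmul_mem _ (suppIn_mono cls_sub_upSet hu) _)
  · rw [map_add, map_zsmul, hexr, hr_def, smul_sub, sub_add_cancel, smul_smul]

end Main


section Conclude
variable [DecidableEq I]
variable (χ : ∀ i, A i →+ ℚ) (hχ : ∀ i, Function.Injective (χ i))
  (ha : ∀ i, ∃ a : A i, a ≠ 0)

include hχ ha in
theorem ess_image (hb : ¬ ∃ f : ℕ → I, Function.Injective f ∧
      ∀ k : ℕ, ∃ ψ : A (f k) →+ A (f (k + 1)), Function.Injective ψ)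
    (φ : (⨁ i, A i) →+ (⨁ i, A i)) (hφ : Function.Injective φ)
    (B : AddSubgroup (⨁ i, A i)) (hB : B ≠ ⊥) : φ.range ⊓ B ≠ ⊥ := by
  classical
  obtain ⟨b, hbB, hb0⟩ : ∃ b ∈ B, b ≠ 0 := by
    by_contra hcon
    push_neg at hcon
    exact hB ((AddSubgroup.eq_bot_iff_forall B).mpr hcon)
  have hmem : b ∈ exd φ ⊤ := by
    rw [← DirectSum.sum_support_of b]
    refine AddSubgroup.sum_mem _ fun j _ => ?_
    have h1 : DirectSum.of A j (b j) ∈ suppIn (upSet A j) :=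
      of_mem_suppIn (show j ∈ upSet A j from rel_refl j) (b j)
    exact exd_mono φ le_top (main_ind χ hχ ha hb φ hφ j _ h1)
  obtain ⟨n, hn, h, -, hex⟩ := hmem
  intro hbot
  have hnb : n • b ∈ φ.range ⊓ B :=
    AddSubgroup.mem_inf.mpr ⟨⟨h, hex⟩, AddSubgroup.zsmul_mem B hbB n⟩
  rw [hbot, AddSubgroup.mem_bot] at hnb
  obtain ⟨j, hj⟩ : ∃ j, b j ≠ 0 := by
    by_contra hcon; push_neg at hcon; exact hb0 (coords_eq_zero hcon)
  apply hj
  apply zsmul_eq_zero' χ hχ hn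
  have h2 : n • (b j) = (n • b) j := (map_zsmul (evalHom j) n b).symm
  rw [h2, hnb]
  rfl

end Conclude

section Shift
variable [DecidableEq I]

/-- cast along an index equality -/
def castHom {i j : I} (e : i = j) : A i →+ A j := Eq.recOn e (AddMonoidHom.id (A i))

@[simp] lemma castHom_self {i : I} (e : i = i) (a : A i) : castHom e a = a := rfl

theorem not_bassian_of_seq (ha : ∀ i, ∃ a : A i, a ≠ 0)
    (f : ℕ → I) (hf : Function.Injective f)
    (ψ : ∀ k, A (f k) →+ A (f (k + 1))) (hψ : ∀ k, Function.Injective (ψ k))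
    (hBF : ∀ A' B' : AddSubgroup (⨁ i, A i), IsCompl A' B' → B' ≠ ⊥ →
      ∀ φ : (⨁ i, A i) →+ A', ¬ Function.Injective φ) : False := by
  classical
  set θ : ∀ i, A i →+ (⨁ i, A i) := fun i =>
    if h : ∃ k, f k = i then
      (DirectSum.of A (f (h.choose + 1))).comp ((ψ h.choose).comp (castHom h.choose_spec.symm))
    else DirectSum.of A i with hθ_def
  set Φ : (⨁ i, A i) →+ (⨁ i, A i) := DirectSum.toAddMonoid θ with hΦ_def
  have θ_at : ∀ (k : ℕ) (a : A (f k)), Φ (DirectSum.of A (f k) a)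
      = DirectSum.of A (f (k + 1)) (ψ k a) := by
    intro k a
    have h : ∃ k', f k' = f k := ⟨k, rfl⟩
    have h1 : Φ (DirectSum.of A (f k) a) = θ (f k) a := DirectSum.toAddMonoid_of θ (f k) a
    obtain ⟨k₀, hk₀, him⟩ : ∃ (k₀ : ℕ) (e : f k₀ = f k), θ (f k)
        = (DirectSum.of A (f (k₀ + 1))).comp ((ψ k₀).comp (castHom e.symm)) :=
      ⟨h.choose, h.choose_spec, dif_pos h⟩
    have hk : k₀ = k := hf hk₀
    subst hk
    rw [h1, him, AddMonoidHom.comp_apply, AddMonoidHom.comp_apply, castHom_self]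
  have θ_not : ∀ (i : I), (¬ ∃ k, f k = i) → ∀ a : A i,
      Φ (DirectSum.of A i a) = DirectSum.of A i a := by
    intro i hi a
    have h1 : Φ (DirectSum.of A i a) = θ i a := DirectSum.toAddMonoid_of θ i a
    have h2 : θ i = DirectSum.of A i := dif_neg hi
    rw [h1, h2]
  -- coordinate lemmas
  have L_a : ∀ g : ⨁ i, A i, (Φ g) (f 0) = 0 := by
    intro g
    induction g using DirectSum.induction_on with
    | zero => simp
    | of i a =>
      by_cases h : ∃ k, f k = i
      · obtain ⟨k, rfl⟩ := h
        rw [θ_at k a]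
        exact DirectSum.of_eq_of_ne _ _ _ (Ne.symm (fun hcon => Nat.succ_ne_zero k (hf hcon)))
      · rw [θ_not i h]
        exact DirectSum.of_eq_of_ne _ _ _ (Ne.symm (fun hcon => h ⟨0, hcon.symm⟩))
    | add x y hx hy =>
      rw [map_add, DirectSum.add_apply, hx, hy, add_zero]
  have L_b : ∀ (g : ⨁ i, A i) (j : I), (¬ ∃ k, f k = j) → (Φ g) j = g j := by
    intro g j hj
    induction g using DirectSum.induction_on with
    | zero => simp
    | of i a =>
      by_cases h : ∃ k, f k = i
      · obtain ⟨k, rfl⟩ := h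
        rw [θ_at k a]
        rw [DirectSum.of_eq_of_ne _ _ _ (Ne.symm (fun hcon => hj ⟨k + 1, hcon⟩)),
          DirectSum.of_eq_of_ne _ _ _ (Ne.symm (fun hcon => hj ⟨k, hcon⟩))]
      · rw [θ_not i h]
    | add x y hx hy =>
      rw [map_add, DirectSum.add_apply, hx, hy, DirectSum.add_apply]
  have L_c : ∀ (g : ⨁ i, A i) (k : ℕ), (Φ g) (f (k + 1)) = ψ k (g (f k)) := by
    intro g k
    induction g using DirectSum.induction_on with
    | zero => simp
    | of i a =>
      by_cases h : ∃ k', f k' = i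
      · obtain ⟨k', rfl⟩ := h
        rw [θ_at k' a]
        by_cases hkk : k' = k
        · subst hkk
          rw [DirectSum.of_eq_same, DirectSum.of_eq_same]
        · rw [DirectSum.of_eq_of_ne _ _ _ (Ne.symm (fun hcon => hkk (Nat.succ_injective (hf hcon)))),
            DirectSum.of_eq_of_ne _ _ _ (Ne.symm (fun hcon => hkk (hf hcon))), map_zero]
      · rw [θ_not i h,
          DirectSum.of_eq_of_ne _ _ _ (Ne.symm (fun hcon => h ⟨k + 1, hcon.symm⟩)),
          DirectSum.of_eq_of_ne _ _ _ (Ne.symm (fun hcon => h ⟨k, hcon.symm⟩)), map_zero]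
    | add x y hx hy =>
      rw [map_add, DirectSum.add_apply, hx, hy, DirectSum.add_apply, map_add]
  -- the summand pair
  set A' : AddSubgroup (⨁ i, A i) :=
    { carrier := {g | g (f 0) = 0}
      zero_mem' := by simp
      add_mem' := by
        intro a b hab hbb
        show (a + b) (f 0) = 0
        rw [← evalHom_apply, map_add, evalHom_apply, evalHom_apply, hab, hbb, add_zero]
      neg_mem' := by
        intro a haa
        show (-a) (f 0) = 0
        rw [← evalHom_apply, map_neg, evalHom_apply, haa, neg_zero] } with hA'_def
  have hcompl : IsCompl A' (suppIn {f 0}) := by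
    constructor
    · rw [disjoint_iff, eq_bot_iff]
      intro g hg
      rw [AddSubgroup.mem_inf] at hg
      rw [AddSubgroup.mem_bot]
      refine coords_eq_zero fun j => ?_
      by_cases hj : j = f 0
      · subst hj; exact hg.1
      · exact hg.2 j (fun hcon => hj hcon)
    · rw [codisjoint_iff, eq_top_iff]
      intro g _
      rw [AddSubgroup.mem_sup]
      refine ⟨g - DirectSum.of A (f 0) (g (f 0)), ?_, DirectSum.of A (f 0) (g (f 0)),
        of_mem_suppIn (show f 0 ∈ ({f 0} : Set I) from rfl) _, by rw [sub_add_cancel]⟩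
      show (g - DirectSum.of A (f 0) (g (f 0))) (f 0) = 0
      rw [← evalHom_apply, map_sub, evalHom_apply, evalHom_apply, DirectSum.of_eq_same,
        sub_self]
  have hBne : suppIn (A := A) {f 0} ≠ ⊥ := by
    obtain ⟨a₀, ha₀⟩ := ha (f 0)
    intro hcon
    have hmem : DirectSum.of A (f 0) a₀ ∈ suppIn (A := A) {f 0} := of_mem_suppIn (show f 0 ∈ ({f 0} : Set I) from rfl) _
    rw [hcon, AddSubgroup.mem_bot] at hmem
    apply ha₀
    have := congrArg (fun g : ⨁ i, A i => g (f 0)) hmem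
    simpa [DirectSum.of_eq_same] using this
  have hrange : ∀ g, Φ g ∈ A' := fun g => L_a g
  have hΦinj : Function.Injective Φ := by
    rw [injective_iff_map_eq_zero]
    intro g hg
    refine coords_eq_zero fun j => ?_
    by_cases h : ∃ k, f k = j
    · obtain ⟨k, rfl⟩ := h
      apply hψ k
      rw [← L_c g k, hg, map_zero]
      rfl
    · rw [← L_b g j h, hg]
      rfl
  exact hBF A' (suppIn {f 0}) hcompl hBne (Φ.codRestrict A' hrange)
    (fun x y hxy => hΦinj (congrArg Subtype.val hxy))

end Shift

end CDAux




/-- For a completely decomposable torsion-free abelian group `G = ⨁_{i ∈ I} A i`,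
with each `A i` torsion-free of rank 1, the following are equivalent:
(a) `G` is Bassian-finite;
(b) `G` satisfies the ascending type condition: there is no sequence of pairwise
distinct indices `i₀, i₁, i₂, …` with an injective homomorphism
`A (i k) → A (i (k+1))` for every `k`;
(c) `G` is relatively co-Hopfian. -/

theorem completelyDecomposable_bassianFinite_tfae (I : Type*) (A : I → Type*)
    [∀ i, AddCommGroup (A i)]
    (htf : ∀ i, ∀ g : A i, g ≠ 0 → ¬ IsOfFinAddOrder g)
    (hrk : ∀ i, Module.rank ℚ (ℚ ⊗[ℤ] A i) = 1) :
    List.TFAE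
      [BassianFinite (⨁ i, A i),
       ¬ ∃ f : ℕ → I, Function.Injective f ∧
          ∀ k : ℕ, ∃ ψ : A (f k) →+ A (f (k + 1)), Function.Injective ψ,
       RelativelyCoHopfian (⨁ i, A i)] := by
  classical
  have ha : ∀ i, ∃ a : A i, a ≠ 0 := fun i => exists_ne_zero (A i) (hrk i)
  choose χ hχ using fun i => exists_chi (A i) (htf i) (hrk i)
  tfae_have 1 → 2 := by
    intro h1
    rintro ⟨f, hf, hψ⟩
    choose ψ hψ' using hψ
    exact CDAux.not_bassian_of_seq ha f hf ψ hψ' h1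
  tfae_have 2 → 3 := by
    intro h2 φ hφ B hB
    exact CDAux.ess_image χ hχ ha h2 φ hφ B hB
  tfae_have 3 → 1 := by
    intro h3 Asub B hAB hB φ hφ
    have hinj : Function.Injective (Asub.subtype.comp φ) :=
      fun x y hxy => hφ (Subtype.coe_injective hxy)
    apply h3 (Asub.subtype.comp φ) hinj B hB
    rw [eq_bot_iff]
    intro x hx
    obtain ⟨hr, hxB⟩ := AddSubgroup.mem_inf.mp hx
    obtain ⟨y, hy⟩ := hr
    have hxA : x ∈ Asub := by simp only [AddMonoidHom.comp_apply] at hy; rw [← hy]; exact (φ y).2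
    exact hAB.disjoint.le_bot (AddSubgroup.mem_inf.mpr ⟨hxA, hxB⟩)
  tfae_finish
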